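/- Let S ∈ ℝ^{n×m} be nonzero with ν = min(n,m) ≥ 2, singular value decomposition S = U·Diag(σ₁,…,σ_ν)·Vᵀ (U, V orthogonal, u₁, v₁ the first columns), and suppose σ₁ = α·σ₂ with α > 1. Let λ > 0 satisfy 1/κ(S) ≤ 1 − λ/(1 + λ/ν) ≤ 1/α and let S' = S − λ·(σ₁·u₁v₁ᵀ − (1/ν)·S). Then κ(S') = κ(S)/α, i.e. κ(S') = σ₂/σ_min>0(S). -/

import Mathlib

open Matrix

/-- The Gram matrix `Sᵀ * S` of a real matrix is Hermitian (symmetric). -/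
theorem gram_isHermitian {n m : ℕ} (S : Matrix (Fin n) (Fin m) ℝ) :
    (Sᵀ * S).IsHermitian := by
  simpa [Matrix.conjTranspose_eq_transpose_of_trivial] using
    Matrix.isHermitian_conjTranspose_mul_self S

/-- The singular values of a real `n × m` matrix `S`, in nonincreasing order:
the nonnegative square roots of the `min n m` largest eigenvalues of `Sᵀ * S`. -/
noncomputable def svals {n m : ℕ} (S : Matrix (Fin n) (Fin m) ℝ) :
    Fin (min n m) → ℝ := fun i =>
  Real.sqrt (((gram_isHermitian S).eigenvalues ∘
    Tuple.sort (gram_isHermitian S).eigenvalues)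
      ⟨m - 1 - i, by have := i.isLt; omega⟩)

/-- The operator norm of a matrix induced by the Euclidean norms. -/
noncomputable def opNorm {n m : ℕ} (S : Matrix (Fin n) (Fin m) ℝ) : ℝ :=
  ‖LinearMap.toContinuousLinearMap (Matrix.toEuclideanLin S)‖

/-- The Frobenius norm of a matrix. -/
noncomputable def frobNorm {n m : ℕ} (S : Matrix (Fin n) (Fin m) ℝ) : ℝ :=
  Real.sqrt (∑ i, ∑ j, (S i j) ^ 2)

/-- The regularizer `r(S) = (1/2)‖S‖₂² − (1/(2ν))‖S‖_F²` with `ν = min n m`. -/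
noncomputable def reg {n m : ℕ} (S : Matrix (Fin n) (Fin m) ℝ) : ℝ :=
  (1 / 2) * opNorm S ^ 2 - (1 / (2 * (min n m : ℝ))) * frobNorm S ^ 2

/-- The largest singular value of `S`. -/
noncomputable def sigmaMax {n m : ℕ} (S : Matrix (Fin n) (Fin m) ℝ) : ℝ :=
  ⨆ i, svals S i

/-- The smallest nonzero singular value of `S`. -/
noncomputable def sigmaMinPos {n m : ℕ} (S : Matrix (Fin n) (Fin m) ℝ) : ℝ :=
  sInf {x | (∃ i, svals S i = x) ∧ 0 < x}

/-- The condition number `κ(S) = σ_max(S) / σ_min>0(S)`. -/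
noncomputable def kappa {n m : ℕ} (S : Matrix (Fin n) (Fin m) ℝ) : ℝ :=
  sigmaMax S / sigmaMinPos S

/-- The rectangular diagonal `n × m` matrix with diagonal entries `d`. -/
noncomputable def diagRect {n m : ℕ} (d : Fin (min n m) → ℝ) :
    Matrix (Fin n) (Fin m) ℝ := Matrix.of fun i j =>
  if h : (i : ℕ) = (j : ℕ) then
    d ⟨i, by have := i.isLt; have := j.isLt; omega⟩ else 0



section AuxSVD
open Polynomial

private lemma mapMatrix_transpose' {m : ℕ} (Q : Matrix (Fin m) (Fin m) ℝ) :
    ((C : ℝ →+* ℝ[X]).mapMatrix Q)ᵀ = (C : ℝ →+* ℝ[X]).mapMatrix Qᵀ := by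
  ext i j; simp

private lemma charpoly_conj_orth' {m : ℕ} (Q B : Matrix (Fin m) (Fin m) ℝ)
    (hQ : Qᵀ * Q = 1) : (Qᵀ * B * Q).charpoly = B.charpoly := by
  have hQc : ((C : ℝ →+* ℝ[X]).mapMatrix Q)ᵀ * (C : ℝ →+* ℝ[X]).mapMatrix Q = 1 := by
    rw [mapMatrix_transpose', ← _root_.map_mul, hQ, _root_.map_one]
  have key : charmatrix (Qᵀ * B * Q) =
      ((C : ℝ →+* ℝ[X]).mapMatrix Q)ᵀ * charmatrix B * (C : ℝ →+* ℝ[X]).mapMatrix Q := by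
    rw [charmatrix, charmatrix, Matrix.mul_sub, Matrix.sub_mul]
    congr 1
    · rw [Matrix.scalar_apply, ← Matrix.smul_one_eq_diagonal, Matrix.mul_smul, Matrix.smul_mul,
        Matrix.mul_one, hQc]
    · rw [_root_.map_mul, _root_.map_mul, mapMatrix_transpose']
  have hdet : (((C : ℝ →+* ℝ[X]).mapMatrix Q)ᵀ).det * ((C : ℝ →+* ℝ[X]).mapMatrix Q).det = 1 := by
    rw [← Matrix.det_mul, hQc, Matrix.det_one]
  rw [Matrix.charpoly, Matrix.charpoly, key, Matrix.det_mul, Matrix.det_mul]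
  rw [mul_right_comm, mul_comm (((C : ℝ →+* ℝ[X]).mapMatrix Q)ᵀ).det, mul_right_comm]
  rw [mul_comm (((C : ℝ →+* ℝ[X]).mapMatrix Q).det) _, mul_assoc,
    mul_comm (((C : ℝ →+* ℝ[X]).mapMatrix Q).det), hdet, mul_one]

private lemma charpoly_diagonal' {m : ℕ} (v : Fin m → ℝ) :
    (Matrix.diagonal v).charpoly = ∏ i : Fin m, (X - C (v i)) := by
  rw [Matrix.charpoly_of_upperTriangular _ (Matrix.blockTriangular_diagonal v)]
  simp

private lemma roots_prod_tuple' {m : ℕ} (v : Fin m → ℝ) :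
    (∏ i : Fin m, (X - C (v i))).roots = Multiset.map v Finset.univ.val := by
  have : (∏ i : Fin m, (X - C (v i)))
      = ((Finset.univ.val.map v).map (fun a => X - C a)).prod := by
    rw [Multiset.map_map, Finset.prod_eq_multiset_prod]; rfl
  rw [this, Polynomial.roots_multiset_prod_X_sub_C]

private lemma charpoly_hermitian' {m : ℕ} (A : Matrix (Fin m) (Fin m) ℝ)
    (hA : A.IsHermitian) :
    A.charpoly = ∏ i : Fin m, (X - C (hA.eigenvalues i)) := by
  set W : Matrix (Fin m) (Fin m) ℝ := (hA.eigenvectorUnitary : Matrix (Fin m) (Fin m) ℝ) with hW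
  have hWu : Wᵀ * W = 1 := by
    have := (Matrix.mem_unitaryGroup_iff'.mp (hA.eigenvectorUnitary).2)
    simpa [Matrix.star_eq_conjTranspose, Matrix.conjTranspose_eq_transpose_of_trivial] using this
  have hWWt : W * Wᵀ = 1 := mul_eq_one_comm.mp hWu
  have hsp : A = (Wᵀ)ᵀ * Matrix.diagonal hA.eigenvalues * Wᵀ := by
    have := hA.spectral_theorem
    simpa [Matrix.star_eq_conjTranspose, Matrix.conjTranspose_eq_transpose_of_trivial,
      Matrix.transpose_transpose, Function.comp] using this
  have : A.charpoly = (Matrix.diagonal hA.eigenvalues).charpoly := by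
    conv_lhs => rw [hsp]
    exact charpoly_conj_orth' _ _ (by simpa [Matrix.transpose_transpose] using hWWt)
  rw [this, charpoly_diagonal']

private lemma eig_multiset' {m : ℕ} (A : Matrix (Fin m) (Fin m) ℝ) (hA : A.IsHermitian)
    (Q : Matrix (Fin m) (Fin m) ℝ) (hQ : Qᵀ * Q = 1) (μ : Fin m → ℝ)
    (hAeq : A = Qᵀ * Matrix.diagonal μ * Q) :
    Multiset.map hA.eigenvalues Finset.univ.val = Multiset.map μ Finset.univ.val := by
  have h1 : A.charpoly = ∏ i : Fin m, (X - C (hA.eigenvalues i)) := charpoly_hermitian' A hA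
  have h2 : A.charpoly = ∏ i : Fin m, (X - C (μ i)) := by
    rw [hAeq, charpoly_conj_orth' _ _ hQ, charpoly_diagonal']
  rw [← roots_prod_tuple', ← roots_prod_tuple', ← h1, ← h2]

end AuxSVD

lemma diagRect_apply {n m : ℕ} (d : Fin (min n m) → ℝ) (i : Fin n) (j : Fin m) :
    diagRect d i j = if h : (i : ℕ) = (j : ℕ) then
      d ⟨i, by have := i.isLt; have := j.isLt; omega⟩ else 0 := rfl

lemma diagRect_transpose_mul {n m : ℕ} (d : Fin (min n m) → ℝ) :
    (diagRect d)ᵀ * diagRect d = Matrix.diagonal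
      (fun j : Fin m => if h : (j : ℕ) < min n m then (d ⟨j, h⟩) ^ 2 else 0) := by
  ext j k
  rw [Matrix.mul_apply]
  simp only [Matrix.transpose_apply]
  by_cases hjk : j = k
  · subst hjk
    rw [Matrix.diagonal_apply_eq]
    by_cases hj : (j : ℕ) < n
    · rw [Finset.sum_eq_single (⟨(j : ℕ), hj⟩ : Fin n)]
      · have hmin : (j : ℕ) < min n m := lt_min hj j.isLt
        simp [diagRect_apply, hmin, sq]
      · intro b _ hb
        have : (b : ℕ) ≠ (j : ℕ) := fun h => hb (Fin.ext h)
        simp [diagRect_apply, this]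
      · simp
    · have hmin : ¬ (j : ℕ) < min n m := fun h => hj (lt_of_lt_of_le h (min_le_left n m))
      rw [dif_neg hmin]
      apply Finset.sum_eq_zero
      intro b _
      have : (b : ℕ) ≠ (j : ℕ) := by omega
      simp [diagRect_apply, this]
  · rw [Matrix.diagonal_apply_ne _ hjk]
    apply Finset.sum_eq_zero
    intro b _
    rcases eq_or_ne ((b : ℕ)) ((j : ℕ)) with h | h
    · have : (b : ℕ) ≠ (k : ℕ) := by
        intro h2; exact hjk (Fin.ext (h.symm.trans h2))
      simp [diagRect_apply, this]
    · simp [diagRect_apply, h]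

lemma mul_diagRect_mul_apply {n m : ℕ} (U : Matrix (Fin n) (Fin n) ℝ)
    (V : Matrix (Fin m) (Fin m) ℝ) (d : Fin (min n m) → ℝ) (i : Fin n) (j : Fin m) :
    (U * diagRect d * Vᵀ) i j = ∑ k : Fin (min n m),
      d k * U i ⟨(k : ℕ), lt_of_lt_of_le k.isLt (min_le_left n m)⟩
        * V j ⟨(k : ℕ), lt_of_lt_of_le k.isLt (min_le_right n m)⟩ := by
  have inner : ∀ a : Fin n, (diagRect d * Vᵀ) a j =
      if h : (a : ℕ) < min n m then d ⟨(a : ℕ), h⟩ *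
        V j ⟨(a : ℕ), lt_of_lt_of_le h (min_le_right n m)⟩ else 0 := by
    intro a
    rw [Matrix.mul_apply]
    by_cases ham : (a : ℕ) < m
    · rw [Finset.sum_eq_single (⟨(a : ℕ), ham⟩ : Fin m)]
      · have hmin : (a : ℕ) < min n m := lt_min a.isLt ham
        simp [diagRect_apply, hmin]
      · intro b _ hb
        have : (a : ℕ) ≠ (b : ℕ) := fun h => hb (Fin.ext h.symm)
        simp [diagRect_apply, this]
      · simp
    · have hmin : ¬ (a : ℕ) < min n m := fun h => ham (lt_of_lt_of_le h (min_le_right n m))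
      rw [dif_neg hmin]
      apply Finset.sum_eq_zero
      intro b _
      have : (a : ℕ) ≠ (b : ℕ) := by omega
      simp [diagRect_apply, this]
  rw [Matrix.mul_assoc, Matrix.mul_apply]
  simp only [inner]
  rw [← Finset.sum_subset (Finset.subset_univ
      (Finset.univ.map (Fin.castLEEmb (min_le_left n m))))]
  · rw [Finset.sum_map]
    apply Finset.sum_congr rfl
    intro k _
    have hk : ((Fin.castLEEmb (min_le_left n m) k : Fin n) : ℕ) = (k : ℕ) := rfl
    rw [dif_pos (by rw [hk]; exact k.isLt)]
    show U i ⟨(k : ℕ), lt_of_lt_of_le k.isLt (min_le_left n m)⟩ *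
        (d k * V j ⟨(k : ℕ), lt_of_lt_of_le k.isLt (min_le_right n m)⟩) =
      d k * U i ⟨(k : ℕ), lt_of_lt_of_le k.isLt (min_le_left n m)⟩ *
        V j ⟨(k : ℕ), lt_of_lt_of_le k.isLt (min_le_right n m)⟩
    ring
  · intro a _ ha
    rw [dif_neg, mul_zero]
    intro h
    exact ha (Finset.mem_map.mpr ⟨⟨(a : ℕ), h⟩, Finset.mem_univ _, Fin.ext rfl⟩)

lemma monotone_unique {m : ℕ} {g w : Fin m → ℝ} (hg : Monotone g) (hw : Monotone w)
    (h : Multiset.map g Finset.univ.val = Multiset.map w Finset.univ.val) : g = w := by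
  apply List.ofFn_injective
  apply List.Perm.eq_of_sortedLE hg.sortedLE_ofFn hw.sortedLE_ofFn
  rw [← Multiset.coe_eq_coe, ← Fin.univ_val_map, ← Fin.univ_val_map]
  exact h

lemma svals_nonneg {n m : ℕ} (S : Matrix (Fin n) (Fin m) ℝ) (i : Fin (min n m)) :
    0 ≤ svals S i := Real.sqrt_nonneg _

lemma svals_antitone {n m : ℕ} (S : Matrix (Fin n) (Fin m) ℝ)
    (a b : Fin (min n m)) (hab : a ≤ b) : svals S b ≤ svals S a := by
  apply Real.sqrt_le_sqrt
  apply Tuple.monotone_sort (gram_isHermitian S).eigenvalues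
  show (⟨m - 1 - (b : ℕ), _⟩ : Fin m) ≤ ⟨m - 1 - (a : ℕ), _⟩
  have hab' : (a : ℕ) ≤ (b : ℕ) := hab
  simp only [Fin.mk_le_mk]
  omega

lemma svals_eq_perm {n m : ℕ} (S : Matrix (Fin n) (Fin m) ℝ)
    (U : Matrix (Fin n) (Fin n) ℝ) (V : Matrix (Fin m) (Fin m) ℝ)
    (hU : Uᵀ * U = 1) (hV : Vᵀ * V = 1) (d : Fin (min n m) → ℝ) (hd : ∀ k, 0 ≤ d k)
    (hS : S = U * diagRect d * Vᵀ) :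
    ∃ e : Equiv.Perm (Fin (min n m)), svals S = d ∘ e := by
  have hνm : min n m ≤ m := min_le_right n m
  set μ : Fin m → ℝ :=
    fun j => if h : (j : ℕ) < min n m then (d ⟨j, h⟩) ^ 2 else 0 with hμ
  have hA : Sᵀ * S = V * Matrix.diagonal μ * Vᵀ := by
    have haux : Uᵀ * (U * (diagRect d * Vᵀ)) = diagRect d * Vᵀ := by
      rw [← Matrix.mul_assoc, hU, Matrix.one_mul]
    rw [hS, Matrix.transpose_mul, Matrix.transpose_mul, Matrix.transpose_transpose,
      ← diagRect_transpose_mul d]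
    simp only [Matrix.mul_assoc, haux]
  have hVVt : V * Vᵀ = 1 := mul_eq_one_comm.mp hV
  have hmult : Multiset.map (gram_isHermitian S).eigenvalues Finset.univ.val
      = Multiset.map μ Finset.univ.val := by
    apply eig_multiset' _ _ Vᵀ (by rwa [Matrix.transpose_transpose])
    rwa [Matrix.transpose_transpose]
  set f := (gram_isHermitian S).eigenvalues with hf
  set g := f ∘ Tuple.sort f with hg
  have hgmono : Monotone g := Tuple.monotone_sort f
  have hgmult : Multiset.map g Finset.univ.val = Multiset.map μ Finset.univ.val := by
    rw [hg, ← Multiset.map_map f (Tuple.sort f), Multiset.map_univ_val_equiv]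
    exact hmult
  set τ : Equiv.Perm (Fin (min n m)) := Tuple.sort (fun k => -d k) with hτ
  have hdτ : ∀ a b : Fin (min n m), a ≤ b → d (τ b) ≤ d (τ a) := by
    intro a b hab
    have := Tuple.monotone_sort (fun k => -d k) hab
    simpa using this
  have hup : ∀ j : Fin m, m - min n m ≤ (j : ℕ) → m - 1 - (j : ℕ) < min n m := by
    intro j hj; have := j.isLt; omega
  set w : Fin m → ℝ := fun j =>
    if h : m - min n m ≤ (j : ℕ) then (d (τ ⟨m - 1 - j, hup j h⟩)) ^ 2 else 0 with hw
  have hwmono : Monotone w := by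
    intro j j' hjj'
    have hjj : (j : ℕ) ≤ (j' : ℕ) := hjj'
    by_cases h1 : m - min n m ≤ (j : ℕ)
    · have h2 : m - min n m ≤ (j' : ℕ) := le_trans h1 hjj
      rw [hw]; simp only [dif_pos h1, dif_pos h2]
      have hle : (⟨m - 1 - j', hup j' h2⟩ : Fin (min n m)) ≤ ⟨m - 1 - j, hup j h1⟩ := by
        simp only [Fin.mk_le_mk]; omega
      exact pow_le_pow_left₀ (hd _) (hdτ _ _ hle) 2
    · rw [hw]; simp only [dif_neg h1]
      by_cases h2 : m - min n m ≤ (j' : ℕ)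
      · rw [dif_pos h2]; positivity
      · rw [dif_neg h2]
  set φ : Fin m → Fin m := fun j =>
    if h : m - min n m ≤ (j : ℕ) then
      ⟨(τ ⟨m - 1 - j, hup j h⟩ : ℕ), lt_of_lt_of_le (τ _).isLt hνm⟩
    else ⟨min n m + (j : ℕ), by have := j.isLt; omega⟩ with hφ
  have hμφ : μ ∘ φ = w := by
    funext j
    by_cases h : m - min n m ≤ (j : ℕ)
    · simp only [Function.comp_apply, hφ, dif_pos h, hw, hμ]
      rw [dif_pos ((τ ⟨m - 1 - j, hup j h⟩).isLt)]
    · simp only [Function.comp_apply, hφ, dif_neg h, hw, hμ]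
      rw [dif_neg (by omega)]
  have hφinj : Function.Injective φ := by
    intro a b hab
    by_cases ha : m - min n m ≤ (a : ℕ) <;> by_cases hb : m - min n m ≤ (b : ℕ)
    · simp only [hφ, dif_pos ha, dif_pos hb, Fin.mk.injEq] at hab
      have h1 : τ ⟨m - 1 - a, hup a ha⟩ = τ ⟨m - 1 - b, hup b hb⟩ := Fin.ext hab
      have h2 : m - 1 - (a : ℕ) = m - 1 - (b : ℕ) :=
        congrArg Fin.val (τ.injective h1)
      have := a.isLt; have := b.isLt
      exact Fin.ext (by omega)
    · simp only [hφ, dif_pos ha, dif_neg hb, Fin.mk.injEq] at hab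
      have := (τ ⟨m - 1 - a, hup a ha⟩).isLt; omega
    · simp only [hφ, dif_neg ha, dif_pos hb, Fin.mk.injEq] at hab
      have := (τ ⟨m - 1 - b, hup b hb⟩).isLt; omega
    · simp only [hφ, dif_neg ha, dif_neg hb, Fin.mk.injEq] at hab
      exact Fin.ext (by omega)
  have hφbij : Function.Bijective φ := Finite.injective_iff_bijective.mp hφinj
  have h1 : Multiset.map φ Finset.univ.val = Finset.univ.val := by
    simpa using Multiset.map_univ_val_equiv (Equiv.ofBijective φ hφbij)
  have hwmult : Multiset.map w Finset.univ.val = Multiset.map μ Finset.univ.val := by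
    calc Multiset.map w Finset.univ.val
        = Multiset.map (μ ∘ φ) Finset.univ.val := by rw [hμφ]
      _ = Multiset.map μ (Multiset.map φ Finset.univ.val) :=
          (Multiset.map_map μ φ _).symm
      _ = Multiset.map μ Finset.univ.val := by rw [h1]
  have hgw : g = w := monotone_unique hgmono hwmono (hgmult.trans hwmult.symm)
  refine ⟨τ, ?_⟩
  funext i
  have hidx : m - min n m ≤ m - 1 - (i : ℕ) := by have := i.isLt; omega
  have hsv : svals S i = Real.sqrt (g ⟨m - 1 - (i : ℕ), by have := i.isLt; omega⟩) := rfl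
  rw [hsv, hgw, hw]
  simp only [dif_pos hidx]
  rw [Real.sqrt_sq (hd _)]
  exact congrArg (fun z => d (τ z)) (Fin.ext (by have := i.isLt; simp; omega))

lemma kappa_aux {n m : ℕ} (hν : 2 ≤ min n m)
    (S : Matrix (Fin n) (Fin m) ℝ) (hS : S ≠ 0)
    (U : Matrix (Fin n) (Fin n) ℝ) (V : Matrix (Fin m) (Fin m) ℝ)
    (hU : Uᵀ * U = 1) (hV : Vᵀ * V = 1)
    (hSVD : S = U * diagRect (svals S) * Vᵀ)
    (i0 i1 : Fin (min n m)) (hi0 : (i0 : ℕ) = 0) (hi1 : (i1 : ℕ) = 1)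
    (u0 : Fin n) (v0 : Fin m) (hu0 : (u0 : ℕ) = 0) (hv0 : (v0 : ℕ) = 0)
    (α : ℝ) (hα : 1 < α) (hσ : svals S i0 = α * svals S i1)
    (lam : ℝ) (hlam : 0 < lam)
    (hcase₁ : 1 / kappa S ≤ 1 - lam / (1 + lam / (min n m : ℝ)))
    (hcase₂ : 1 - lam / (1 + lam / (min n m : ℝ)) ≤ 1 / α) :
    kappa (S - lam • (svals S i0 • Matrix.of (fun i j => U i u0 * V j v0)
        - ((min n m : ℝ))⁻¹ • S)) = kappa S / α
    ∧ kappa (S - lam • (svals S i0 • Matrix.of (fun i j => U i u0 * V j v0)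
        - ((min n m : ℝ))⁻¹ • S)) = svals S i1 / sigmaMinPos S := by
  haveI : Nonempty (Fin (min n m)) := ⟨i0⟩
  have hνR : (2 : ℝ) ≤ (min n m : ℝ) := by exact_mod_cast hν
  have hνpos : (0 : ℝ) < (min n m : ℝ) := by linarith
  set σ := svals S with hσS
  have hnn : ∀ i, 0 ≤ σ i := fun i => Real.sqrt_nonneg _
  have hant : ∀ a b : Fin (min n m), a ≤ b → σ b ≤ σ a := svals_antitone S
  have h0le : ∀ i : Fin (min n m), i0 ≤ i := by
    intro i; show (i0 : ℕ) ≤ (i : ℕ); omega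
  have hne10 : i1 ≠ i0 := fun h => by
    have := congrArg Fin.val h; omega
  -- σ i0 > 0
  have hσ0pos : 0 < σ i0 := by
    rcases (hnn i0).lt_or_eq with h | h
    · exact h
    · exfalso; apply hS
      have hzero : σ = 0 := by
        funext i
        have h2 := hant i0 i (h0le i)
        have h3 := hnn i
        simp only [Pi.zero_apply]
        linarith
      rw [hSVD, hzero]
      have hdz : diagRect (0 : Fin (min n m) → ℝ) = 0 := by
        ext i j
        rw [diagRect_apply]
        split <;> simp
      rw [hdz, Matrix.mul_zero, Matrix.zero_mul]
  set P := {x : ℝ | (∃ i, σ i = x) ∧ 0 < x} with hP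
  have hPfin : P.Finite := (Set.finite_range σ).subset (fun x hx => hx.1)
  have hPne : P.Nonempty := ⟨σ i0, ⟨i0, rfl⟩, hσ0pos⟩
  have hsminP := Set.Nonempty.csInf_mem hPne hPfin
  set smin := sInf P with hsmindef
  obtain ⟨⟨imin, himin⟩, hsminpos⟩ := hsminP
  have hsmin_le : ∀ i, 0 < σ i → smin ≤ σ i := fun i h =>
    csInf_le hPfin.bddBelow ⟨⟨i, rfl⟩, h⟩
  have hminS : sigmaMinPos S = smin := rfl
  have hmaxS : sigmaMax S = σ i0 := by
    apply le_antisymm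
    · exact ciSup_le fun i => hant i0 i (h0le i)
    · exact le_ciSup (Set.Finite.bddAbove (Set.finite_range σ)) i0
  have hkS : kappa S = σ i0 / smin := by
    show sigmaMax S / sigmaMinPos S = σ i0 / smin
    rw [hmaxS, hminS]
  have hα0 : (0 : ℝ) < α := lt_trans one_pos hα
  have hσ1pos : 0 < σ i1 := by
    rcases (hnn i1).lt_or_eq with h | h
    · exact h
    · exfalso; nlinarith [hσ]
  have hσ10 : σ i1 < σ i0 := by nlinarith
  have hsmin_le1 : smin ≤ σ i1 := hsmin_le i1 hσ1pos
  set c := 1 - lam / (1 + lam / (min n m : ℝ)) with hc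
  have htpos : (0 : ℝ) < 1 + lam / (min n m : ℝ) := by positivity
  have hc_ge : smin / σ i0 ≤ c := by
    have h1 : 1 / kappa S = smin / σ i0 := by rw [hkS, one_div_div]
    rw [← h1]; exact hcase₁
  have hcσ_ge : smin ≤ c * σ i0 := by
    rw [div_le_iff₀ hσ0pos] at hc_ge; linarith
  have hcσ_le : c * σ i0 ≤ σ i1 := by
    have h1 : c * σ i0 ≤ (1 / α) * σ i0 :=
      mul_le_mul_of_nonneg_right hcase₂ (le_of_lt hσ0pos)
    have h2 : (1 / α) * σ i0 = σ i1 := by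
      rw [hσ]; field_simp
    exact h1.trans (le_of_eq h2)
  set t := lam / (min n m : ℝ) with ht
  have htnn : (0 : ℝ) < 1 + t := htpos
  have h1tne : (1 + t) ≠ 0 := ne_of_gt htpos
  have hkey : (1 + t) - lam = (1 + t) * c := by
    rw [hc]
    field_simp
  -- the new diagonal
  set d' : Fin (min n m) → ℝ :=
    fun k => (1 + t) * σ k + (if k = i0 then -(lam * σ i0) else 0) with hd'
  have hd'app : ∀ k, d' k = (1 + t) * σ k + (if k = i0 then -(lam * σ i0) else 0) :=
    fun k => rfl
  have hd'i0 : d' i0 = (1 + t) * (c * σ i0) := by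
    rw [hd'app i0, if_pos rfl]
    linear_combination σ i0 * hkey
  have hd'ne : ∀ k, k ≠ i0 → d' k = (1 + t) * σ k := by
    intro k hk; rw [hd'app k, if_neg hk, add_zero]
  have hd'nn : ∀ k, 0 ≤ d' k := by
    intro k
    by_cases hk : k = i0
    · rw [hk, hd'i0]
      have : 0 < c * σ i0 := lt_of_lt_of_le hsminpos hcσ_ge
      positivity
    · rw [hd'ne k hk]
      exact mul_nonneg (le_of_lt htnn) (hnn k)
  set S' := S - lam • (σ i0 • Matrix.of (fun i j => U i u0 * V j v0)
      - ((min n m : ℝ))⁻¹ • S) with hS'def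
  have hu0' : u0 = ⟨(i0 : ℕ), lt_of_lt_of_le i0.isLt (min_le_left n m)⟩ := by
    apply Fin.ext
    show (u0 : ℕ) = (i0 : ℕ)
    omega
  have hv0' : v0 = ⟨(i0 : ℕ), lt_of_lt_of_le i0.isLt (min_le_right n m)⟩ := by
    apply Fin.ext
    show (v0 : ℕ) = (i0 : ℕ)
    omega
  have hS'eq : S' = U * diagRect d' * Vᵀ := by
    ext i j
    have hSij : S i j = ∑ k : Fin (min n m),
        σ k * U i ⟨(k : ℕ), lt_of_lt_of_le k.isLt (min_le_left n m)⟩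
          * V j ⟨(k : ℕ), lt_of_lt_of_le k.isLt (min_le_right n m)⟩ := by
      conv_lhs => rw [hSVD]
      exact mul_diagRect_mul_apply U V σ i j
    rw [hS'def]
    rw [show (U * diagRect d' * Vᵀ) i j = _ from mul_diagRect_mul_apply U V d' i j]
    have hsplit : ∑ k : Fin (min n m),
        d' k * U i ⟨(k : ℕ), lt_of_lt_of_le k.isLt (min_le_left n m)⟩
          * V j ⟨(k : ℕ), lt_of_lt_of_le k.isLt (min_le_right n m)⟩
        = (1 + t) * (∑ k : Fin (min n m),
            σ k * U i ⟨(k : ℕ), lt_of_lt_of_le k.isLt (min_le_left n m)⟩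
              * V j ⟨(k : ℕ), lt_of_lt_of_le k.isLt (min_le_right n m)⟩)
          + (-(lam * σ i0)) *
            (U i ⟨(i0 : ℕ), lt_of_lt_of_le i0.isLt (min_le_left n m)⟩
              * V j ⟨(i0 : ℕ), lt_of_lt_of_le i0.isLt (min_le_right n m)⟩) := by
      rw [Finset.mul_sum]
      rw [show (-(lam * σ i0)) *
            (U i ⟨(i0 : ℕ), lt_of_lt_of_le i0.isLt (min_le_left n m)⟩
              * V j ⟨(i0 : ℕ), lt_of_lt_of_le i0.isLt (min_le_right n m)⟩)
          = ∑ k : Fin (min n m), if k = i0 then (-(lam * σ i0)) *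
            (U i ⟨(k : ℕ), lt_of_lt_of_le k.isLt (min_le_left n m)⟩
              * V j ⟨(k : ℕ), lt_of_lt_of_le k.isLt (min_le_right n m)⟩) else 0 from
        by rw [Finset.sum_ite_eq' Finset.univ i0]; simp]
      rw [← Finset.sum_add_distrib]
      apply Finset.sum_congr rfl
      intro k _
      rw [hd'app k]
      by_cases hk : k = i0
      · rw [if_pos hk, if_pos hk]
        ring
      · rw [if_neg hk, if_neg hk]
        ring
    rw [hsplit, ← hSij]
    simp only [Matrix.sub_apply, Matrix.smul_apply, Matrix.of_apply, smul_eq_mul]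
    rw [hu0', hv0', ht]
    field_simp
    ring
  obtain ⟨e, he⟩ := svals_eq_perm S' U V hU hV d' hd'nn hS'eq
  have hd'le : ∀ k, d' k ≤ (1 + t) * σ i1 := by
    intro k
    by_cases hk : k = i0
    · rw [hk, hd'i0]
      exact mul_le_mul_of_nonneg_left hcσ_le (le_of_lt htnn)
    · rw [hd'ne k hk]
      apply mul_le_mul_of_nonneg_left _ (le_of_lt htnn)
      apply hant i1 k
      show (i1 : ℕ) ≤ (k : ℕ)
      have : (k : ℕ) ≠ 0 := fun h => hk (Fin.ext (by omega))
      omega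
  have hd'i1 : d' i1 = (1 + t) * σ i1 := hd'ne i1 hne10
  have hmax' : sigmaMax S' = (1 + t) * σ i1 := by
    show (⨆ i, svals S' i) = (1 + t) * σ i1
    apply le_antisymm
    · apply ciSup_le
      intro i
      rw [he]
      exact hd'le (e i)
    · have h1 : svals S' (e.symm i1) = (1 + t) * σ i1 := by
        rw [he]
        show d' (e (e.symm i1)) = _
        rw [Equiv.apply_symm_apply, hd'i1]
      rw [← h1]
      exact le_ciSup (Set.Finite.bddAbove (Set.finite_range (svals S'))) (e.symm i1)
  have himin0 : imin ≠ i0 := by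
    intro h
    rw [h] at himin
    linarith
  have hmin' : sigmaMinPos S' = (1 + t) * smin := by
    show sInf {x | (∃ i, svals S' i = x) ∧ 0 < x} = (1 + t) * smin
    have hmem : (1 + t) * smin ∈ {x | (∃ i, svals S' i = x) ∧ 0 < x} := by
      refine ⟨⟨e.symm imin, ?_⟩, mul_pos htnn hsminpos⟩
      rw [he]
      show d' (e (e.symm imin)) = _
      rw [Equiv.apply_symm_apply, hd'ne imin himin0, himin]
    have hlb : ∀ x ∈ {x | (∃ i, svals S' i = x) ∧ 0 < x}, (1 + t) * smin ≤ x := by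
      rintro x ⟨⟨i, hi⟩, hxpos⟩
      rw [he] at hi
      by_cases hk : e i = i0
      · rw [← hi]
        show (1 + t) * smin ≤ d' (e i)
        rw [hk, hd'i0]
        exact mul_le_mul_of_nonneg_left hcσ_ge (le_of_lt htnn)
      · have hx : x = (1 + t) * σ (e i) := by rw [← hi]; exact hd'ne (e i) hk
        have hσpos : 0 < σ (e i) := by
          by_contra hcon
          push_neg at hcon
          have : σ (e i) = 0 := le_antisymm hcon (hnn (e i))
          rw [this, mul_zero] at hx
          linarith
        rw [hx]
        exact mul_le_mul_of_nonneg_left (hsmin_le (e i) hσpos) (le_of_lt htnn)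
    exact le_antisymm (csInf_le ⟨0, fun y hy => le_of_lt hy.2⟩ hmem)
      (le_csInf ⟨_, hmem⟩ hlb)
  have hk' : kappa S' = σ i1 / smin := by
    show sigmaMax S' / sigmaMinPos S' = σ i1 / smin
    rw [hmax', hmin', mul_div_mul_left _ _ (ne_of_gt htnn)]
  constructor
  · rw [hk', hkS, hσ]
    rw [eq_div_iff (ne_of_gt hα0), div_mul_eq_mul_div, mul_comm (σ i1) α]
  · rw [hk', hminS]

/-- Let `S ∈ ℝ^{n×m}` be nonzero with `ν = min n m ≥ 2`, singular
value decomposition `S = U·Diag(σ₁,…,σ_ν)·Vᵀ` (`U`, `V` orthogonal, `u₁`, `v₁` the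
first columns), and suppose `σ₁ = α·σ₂` with `α > 1`. Let `λ > 0` satisfy
`1/κ(S) ≤ 1 − λ/(1 + λ/ν) ≤ 1/α` and let `S' = S − λ·(σ₁·u₁v₁ᵀ − (1/ν)·S)`. Then
`κ(S') = κ(S)/α`, i.e. `κ(S') = σ₂/σ_min>0(S)`. -/
theorem kappa_descent_case_two {n m : ℕ} (hν : 2 ≤ min n m)
    (S : Matrix (Fin n) (Fin m) ℝ) (hS : S ≠ 0)
    (U : Matrix (Fin n) (Fin n) ℝ) (V : Matrix (Fin m) (Fin m) ℝ)
    (hU : Uᵀ * U = 1) (hV : Vᵀ * V = 1)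
    (hSVD : S = U * diagRect (svals S) * Vᵀ)
    (α : ℝ) (hα : 1 < α)
    (hσ : svals S ⟨0, by omega⟩ = α * svals S ⟨1, by omega⟩)
    (lam : ℝ) (hlam : 0 < lam)
    (hcase₁ : 1 / kappa S ≤ 1 - lam / (1 + lam / (min n m : ℝ)))
    (hcase₂ : 1 - lam / (1 + lam / (min n m : ℝ)) ≤ 1 / α) :
    kappa (S - lam • (svals S ⟨0, by omega⟩ •
        Matrix.of (fun i j => U i ⟨0, by omega⟩ * V j ⟨0, by omega⟩)
      - ((min n m : ℝ))⁻¹ • S)) = kappa S / α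
    ∧ kappa (S - lam • (svals S ⟨0, by omega⟩ •
        Matrix.of (fun i j => U i ⟨0, by omega⟩ * V j ⟨0, by omega⟩)
      - ((min n m : ℝ))⁻¹ • S)) = svals S ⟨1, by omega⟩ / sigmaMinPos S := by
  exact kappa_aux hν S hS U V hU hV hSVD ⟨0, by omega⟩ ⟨1, by omega⟩ rfl rfl
    ⟨0, by omega⟩ ⟨0, by omega⟩ rfl rfl α hα hσ lam hlam hcase₁ hcase₂
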